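/- Let b ≥ 2 and N ≥ 1 be integers. Let S_1 be the b×b lower-triangular matrix all of whose entries on or below the diagonal equal 1, with S_{N+1} := S_1 ⊗ S_N; let M_1 be the b×b matrix with 1's on the diagonal, -1's on the subdiagonal, and 0 elsewhere, with M_{N+1} := M_1 ⊗ M_N; and set T_N := M_Nᵀ, U_N := S_N T_N, V_N := T_N S_N. Then U_N^{b+1} = V_N^{b+1} = (-1)^{N(b+1)} · I_{b^N}. -/

import Mathlib

open Matrix

/-- The matrix `S_1`: the `b×b` lower-triangular matrix all of whose entries on or below the
diagonal equal `1`. -/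
def S1 (b : ℕ) : Matrix (Fin b) (Fin b) ℤ :=
  Matrix.of fun j k => if (k : ℕ) ≤ (j : ℕ) then 1 else 0

/-- The matrix `M_1`: the `b×b` matrix with `1`'s on the diagonal, `-1`'s on the subdiagonal,
and `0` elsewhere. -/
def M1 (b : ℕ) : Matrix (Fin b) (Fin b) ℤ :=
  Matrix.of fun j k =>
    if (j : ℕ) = (k : ℕ) then 1 else if (j : ℕ) = (k : ℕ) + 1 then -1 else 0

/-- The equivalence `Fin b × Fin (b^N) ≃ Fin (b^(N+1))`, `(p, r) ↦ p·b^N + r`, used to index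
Kronecker products. -/
def pke (b N : ℕ) : Fin b × Fin (b ^ N) ≃ Fin (b ^ (N + 1)) :=
  finProdFinEquiv.trans (finCongr (by ring))

open Kronecker in
/-- The matrices `S_N`, defined recursively by `S_{N+1} = S_1 ⊗ S_N` (Kronecker product). -/
def Smat (b : ℕ) : (N : ℕ) → Matrix (Fin (b ^ N)) (Fin (b ^ N)) ℤ
  | 0 => 1
  | N + 1 => Matrix.reindex (pke b N) (pke b N) (S1 b ⊗ₖ Smat b N)

open Kronecker in
/-- The matrices `M_N`, defined recursively by `M_{N+1} = M_1 ⊗ M_N` (Kronecker product). -/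
def Mmat (b : ℕ) : (N : ℕ) → Matrix (Fin (b ^ N)) (Fin (b ^ N)) ℤ
  | 0 => 1
  | N + 1 => Matrix.reindex (pke b N) (pke b N) (M1 b ⊗ₖ Mmat b N)

/-! ### Auxiliary development -/

/-- `U = S1 * M1ᵀ` computed explicitly. -/
def Umat (b : ℕ) : Matrix (Fin b) (Fin b) ℤ :=
  Matrix.of fun i j => if (j:ℕ) = 0 then 1 else if (i:ℕ)+1 = (j:ℕ) then -1 else 0

/-- Explicit formula for the powers of `Umat`. -/
def Pmat (b k : ℕ) : Matrix (Fin b) (Fin b) ℤ :=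
  Matrix.of fun i j =>
    if k ≤ (j:ℕ) then (if (i:ℕ) + k = (j:ℕ) then (-1)^k else 0)
    else if (j:ℕ) + 1 = k then (-1)^(k-1)
    else (if (i:ℕ) + k = b + 1 + (j:ℕ) then (-1)^k else 0)

lemma U_eq (b : ℕ) : S1 b * (M1 b)ᵀ = Umat b := by
  ext i j
  have hi := i.isLt; have hj := j.isLt
  rw [mul_apply]
  have h1 : ∀ m : Fin b, S1 b i m * (M1 b)ᵀ m j =
      ((fun x : ℕ => (if x = (j:ℕ) then (if (j:ℕ) ≤ (i:ℕ) then (1:ℤ) else 0) else 0)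
        + (if x = (j:ℕ) - 1 then (if 1 ≤ (j:ℕ) ∧ (j:ℕ) - 1 ≤ (i:ℕ) then -1 else 0) else 0)) (m:ℕ)) := by
    intro m
    simp only [S1, M1, transpose_apply, of_apply, ite_mul, one_mul, zero_mul, mul_ite, mul_one,
      mul_neg, mul_zero]
    split_ifs <;> omega
  rw [Finset.sum_congr rfl fun m _ => h1 m,
    Fin.sum_univ_eq_sum_range (fun x : ℕ => (if x = (j:ℕ) then (if (j:ℕ) ≤ (i:ℕ) then (1:ℤ) else 0) else 0)
        + (if x = (j:ℕ) - 1 then (if 1 ≤ (j:ℕ) ∧ (j:ℕ) - 1 ≤ (i:ℕ) then -1 else 0) else 0)) b,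
    Finset.sum_add_distrib, Finset.sum_ite_eq', Finset.sum_ite_eq']
  simp only [Finset.mem_range, Umat, of_apply]
  split_ifs <;> omega

lemma S1_mul_M1 (b : ℕ) : S1 b * M1 b = 1 := by
  ext i j
  have hi := i.isLt; have hj := j.isLt
  rw [mul_apply]
  have h1 : ∀ m : Fin b, S1 b i m * M1 b m j =
      ((fun x : ℕ => (if x = (j:ℕ) then (if (j:ℕ) ≤ (i:ℕ) then (1:ℤ) else 0) else 0)
        + (if x = (j:ℕ) + 1 then (if (j:ℕ) + 1 ≤ (i:ℕ) then -1 else 0) else 0)) (m:ℕ)) := by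
    intro m
    simp only [S1, M1, of_apply, ite_mul, one_mul, zero_mul, mul_ite, mul_one, mul_neg, mul_zero]
    split_ifs <;> omega
  rw [Finset.sum_congr rfl fun m _ => h1 m,
    Fin.sum_univ_eq_sum_range (fun x : ℕ => (if x = (j:ℕ) then (if (j:ℕ) ≤ (i:ℕ) then (1:ℤ) else 0) else 0)
        + (if x = (j:ℕ) + 1 then (if (j:ℕ) + 1 ≤ (i:ℕ) then -1 else 0) else 0)) b,
    Finset.sum_add_distrib, Finset.sum_ite_eq', Finset.sum_ite_eq']
  simp only [Finset.mem_range, one_apply, Fin.ext_iff]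
  split_ifs <;> omega

lemma M1_mul_S1 (b : ℕ) : M1 b * S1 b = 1 := by
  ext i j
  have hi := i.isLt; have hj := j.isLt
  rw [mul_apply]
  have h1 : ∀ m : Fin b, M1 b i m * S1 b m j =
      ((fun x : ℕ => (if x = (i:ℕ) then (if (j:ℕ) ≤ (i:ℕ) then (1:ℤ) else 0) else 0)
        + (if x = (i:ℕ) - 1 then (if 1 ≤ (i:ℕ) ∧ (j:ℕ) ≤ (i:ℕ) - 1 then -1 else 0) else 0)) (m:ℕ)) := by
    intro m
    simp only [S1, M1, of_apply, ite_mul, one_mul, zero_mul, mul_ite, mul_one, mul_neg, mul_zero,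
      neg_zero]
    split_ifs <;> omega
  rw [Finset.sum_congr rfl fun m _ => h1 m,
    Fin.sum_univ_eq_sum_range (fun x : ℕ => (if x = (i:ℕ) then (if (j:ℕ) ≤ (i:ℕ) then (1:ℤ) else 0) else 0)
        + (if x = (i:ℕ) - 1 then (if 1 ≤ (i:ℕ) ∧ (j:ℕ) ≤ (i:ℕ) - 1 then -1 else 0) else 0)) b,
    Finset.sum_add_distrib, Finset.sum_ite_eq', Finset.sum_ite_eq']
  simp only [Finset.mem_range, one_apply, Fin.ext_iff]
  split_ifs <;> omega

lemma mulU_lt (b : ℕ) (A : Matrix (Fin b) (Fin b) ℤ) (i j : Fin b) (h : (i:ℕ)+1 < b) :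
    (Umat b * A) i j = A ⟨0, i.pos⟩ j - A ⟨(i:ℕ)+1, h⟩ j := by
  rw [mul_apply]
  have h1 : ∀ m : Fin b, Umat b i m * A m j =
      (if m = ⟨0, i.pos⟩ then A m j else 0) + (if m = ⟨(i:ℕ)+1, h⟩ then -(A m j) else 0) := by
    intro m
    have hm := m.isLt
    simp only [Umat, of_apply, ite_mul, one_mul, neg_one_mul, zero_mul, Fin.ext_iff]
    split_ifs <;> omega
  rw [Finset.sum_congr rfl fun m _ => h1 m, Finset.sum_add_distrib,
    Finset.sum_ite_eq', Finset.sum_ite_eq']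
  simp [sub_eq_add_neg]

lemma mulU_last (b : ℕ) (A : Matrix (Fin b) (Fin b) ℤ) (i j : Fin b) (h : ¬ ((i:ℕ)+1 < b)) :
    (Umat b * A) i j = A ⟨0, i.pos⟩ j := by
  rw [mul_apply]
  have h1 : ∀ m : Fin b, Umat b i m * A m j =
      (if m = ⟨0, i.pos⟩ then A m j else 0) := by
    intro m
    have hm := m.isLt
    simp only [Umat, of_apply, ite_mul, one_mul, neg_one_mul, zero_mul, Fin.ext_iff]
    split_ifs <;> omega
  rw [Finset.sum_congr rfl fun m _ => h1 m, Finset.sum_ite_eq']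
  simp

lemma Upow (b : ℕ) : ∀ k, k ≤ b → (Umat b)^(k+1) = Pmat b (k+1) := by
  intro k
  induction k with
  | zero =>
    intro _
    ext i j
    have hi := i.isLt; have hj := j.isLt
    have v1 : ((-1:ℤ))^(1:ℕ) = -1 := by norm_num
    have v0 : ((-1:ℤ))^((1:ℕ)-1) = 1 := by norm_num
    simp only [zero_add, pow_one, Umat, Pmat, of_apply, v1, v0]
    split_ifs <;> omega
  | succ k IH =>
    intro hk
    have e1 : (k + 1 + 1) - 1 = k + 1 := by omega
    have e2 : (k + 1) - 1 = k := by omega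
    have v1 : ((-1:ℤ))^(k+1+1) = -((-1)^(k+1)) := by rw [pow_succ]; ring
    have v2 : ((-1:ℤ))^(k+1) = -((-1)^k) := by rw [pow_succ]; ring
    rw [pow_succ' (Umat b) (k+1), IH (by omega)]
    ext i j
    have hi := i.isLt; have hj := j.isLt
    by_cases hib : (i:ℕ)+1 < b
    · rw [mulU_lt b _ i j hib]
      simp only [Pmat, of_apply, e1, e2, v1, v2]
      split_ifs <;> omega
    · rw [mulU_last b _ i j hib]
      simp only [Pmat, of_apply, e1, e2, v1, v2]
      split_ifs <;> omega

lemma base_U (b : ℕ) : (S1 b * (M1 b)ᵀ)^(b+1) = ((-1:ℤ)^(b+1)) • 1 := by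
  rw [U_eq, Upow b b le_rfl]
  ext i j
  have hi := i.isLt; have hj := j.isLt
  simp only [Pmat, of_apply, Matrix.smul_apply, one_apply, smul_eq_mul, Fin.ext_iff]
  split_ifs <;> first | (exfalso; omega) | ring | omega

open Kronecker in
lemma kron_pow {p q : ℕ} (A : Matrix (Fin p) (Fin p) ℤ) (B : Matrix (Fin q) (Fin q) ℤ) :
    ∀ n : ℕ, (A ⊗ₖ B)^n = (A^n) ⊗ₖ (B^n) := by
  intro n
  induction n with
  | zero => simp [Matrix.one_kronecker_one]
  | succ n ih => rw [pow_succ, ih, pow_succ, pow_succ, Matrix.mul_kronecker_mul]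

open Kronecker in
lemma SM_one (b : ℕ) : ∀ N, Smat b N * Mmat b N = 1 := by
  intro N
  induction N with
  | zero => show (1 : Matrix (Fin (b^0)) (Fin (b^0)) ℤ) * 1 = 1; exact Matrix.mul_one _
  | succ N ih =>
    show Matrix.reindex (pke b N) (pke b N) (S1 b ⊗ₖ Smat b N) *
        Matrix.reindex (pke b N) (pke b N) (M1 b ⊗ₖ Mmat b N) = 1
    rw [← Matrix.reindexAlgEquiv_apply ℤ ℤ, ← Matrix.reindexAlgEquiv_apply ℤ ℤ, ← _root_.map_mul,
      ← Matrix.mul_kronecker_mul, S1_mul_M1, ih, Matrix.one_kronecker_one, _root_.map_one]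

open Kronecker in
lemma MS_one (b : ℕ) : ∀ N, Mmat b N * Smat b N = 1 := by
  intro N
  induction N with
  | zero => show (1 : Matrix (Fin (b^0)) (Fin (b^0)) ℤ) * 1 = 1; exact Matrix.mul_one _
  | succ N ih =>
    show Matrix.reindex (pke b N) (pke b N) (M1 b ⊗ₖ Mmat b N) *
        Matrix.reindex (pke b N) (pke b N) (S1 b ⊗ₖ Smat b N) = 1
    rw [← Matrix.reindexAlgEquiv_apply ℤ ℤ, ← Matrix.reindexAlgEquiv_apply ℤ ℤ, ← _root_.map_mul,
      ← Matrix.mul_kronecker_mul, M1_mul_S1, ih, Matrix.one_kronecker_one, _root_.map_one]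

open Kronecker in
lemma U_pow (b : ℕ) : ∀ N, (Smat b N * (Mmat b N)ᵀ)^(b+1) = ((-1:ℤ)^(N*(b+1))) • 1 := by
  intro N
  induction N with
  | zero =>
    show ((1 : Matrix (Fin (b^0)) (Fin (b^0)) ℤ) * 1ᵀ)^(b+1) = _
    rw [Matrix.transpose_one, Matrix.mul_one, one_pow, Nat.zero_mul, pow_zero (-1 : ℤ), one_smul]
  | succ N ih =>
    show (Matrix.reindex (pke b N) (pke b N) (S1 b ⊗ₖ Smat b N) *
        (Matrix.reindex (pke b N) (pke b N) (M1 b ⊗ₖ Mmat b N))ᵀ)^(b+1) = _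
    rw [Matrix.transpose_reindex, ← Matrix.kroneckerMap_transpose,
      ← Matrix.reindexAlgEquiv_apply ℤ ℤ, ← Matrix.reindexAlgEquiv_apply ℤ ℤ, ← _root_.map_mul,
      ← Matrix.mul_kronecker_mul, ← map_pow, kron_pow, base_U, ih,
      Matrix.smul_kronecker, Matrix.kronecker_smul, Matrix.one_kronecker_one, smul_smul,
      _root_.map_smul, _root_.map_one]
    rw [show (N+1)*(b+1) = (b+1) + N*(b+1) by ring, pow_add (-1 : ℤ) (b+1) (N*(b+1))]

lemma conj_pow_aux {n : Type*} [Fintype n] [DecidableEq n] (u v X : Matrix n n ℤ)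
    (huv : u * v = 1) (hvu : v * u = 1) : ∀ t, (v * X * u)^t = v * X^t * u := by
  have hcancel : ∀ Y : Matrix n n ℤ, u * (v * Y) = Y := by
    intro Y; rw [← Matrix.mul_assoc, huv, Matrix.one_mul]
  intro t
  induction t with
  | zero => simp [hvu]
  | succ t ih =>
    rw [pow_succ, pow_succ, ih]
    simp only [Matrix.mul_assoc, hcancel]

lemma V_pow (b : ℕ) (N : ℕ) :
    ((Mmat b N)ᵀ * Smat b N)^(b+1) = ((-1:ℤ)^(N*(b+1))) • 1 := by
  have h1 : (Mmat b N)ᵀ * (Smat b N)ᵀ = 1 := by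
    rw [← Matrix.transpose_mul, SM_one, Matrix.transpose_one]
  have h2 : (Smat b N)ᵀ * (Mmat b N)ᵀ = 1 := by
    rw [← Matrix.transpose_mul, MS_one, Matrix.transpose_one]
  have hMS : (Mmat b N)ᵀ * Smat b N
      = (Mmat b N)ᵀ * (Smat b N * (Mmat b N)ᵀ) * (Smat b N)ᵀ := by
    rw [Matrix.mul_assoc, Matrix.mul_assoc, h1, Matrix.mul_one]
  rw [hMS, conj_pow_aux _ _ _ h2 h1, U_pow, Matrix.mul_smul, Matrix.mul_one, Matrix.smul_mul, h1]

/-- With `T_N := M_Nᵀ`, `U_N := S_N T_N` and `V_N := T_N S_N`, one has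
`U_N^{b+1} = V_N^{b+1} = (-1)^{N(b+1)} · I_{b^N}`. -/
theorem UN_VN_pow (b N : ℕ) (hb : 2 ≤ b) (hN : 1 ≤ N) :
    (Smat b N * (Mmat b N)ᵀ) ^ (b + 1) = ((-1 : ℤ) ^ (N * (b + 1))) • 1 ∧
      ((Mmat b N)ᵀ * Smat b N) ^ (b + 1) = ((-1 : ℤ) ^ (N * (b + 1))) • 1 := by
  exact ⟨U_pow b N, V_pow b N⟩
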